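/- Let A = {a_1 < ... < a_n} be a convex set, let k = ⌈√n⌉, and suppose k + 1 + k(k+1)/2 ≤ n. Define M = {(a_{k+1-i}, a_{k+1+i(i+1)/2}) : 1 ≤ i ≤ k}. Then M is a matching on A of size k and the set {a_{k+1+i(i+1)/2} - a_{k+1-i} : 1 ≤ i ≤ k} is convex. -/
import Mathlib


/-- `M ⊆ A × A` is a matching if each element of `A` occurs in at most one coordinate of
at most one pair of `M`. -/
def IsMatching (A : Finset ℝ) (M : Finset (ℝ × ℝ)) : Prop :=
  (∀ p ∈ M, p.1 ∈ A ∧ p.2 ∈ A ∧ p.1 ≠ p.2) ∧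
  (∀ p ∈ M, ∀ q ∈ M, p ≠ q → p.1 ≠ q.1 ∧ p.1 ≠ q.2 ∧ p.2 ≠ q.1 ∧ p.2 ≠ q.2)


private lemma amono {n : ℕ} {a : ℕ → ℝ}
    (ha : ∀ i, 1 ≤ i → i + 1 ≤ n → a i < a (i + 1)) :
    ∀ i j, 1 ≤ i → i < j → j ≤ n → a i < a j := by
  intro i j h1 hij hjn
  have key : ∀ m, i + 1 ≤ m → m ≤ n → a i < a m := by
    intro m hm
    induction m, hm using Nat.le_induction with
    | base => intro h; exact ha i h1 h
    | succ m hm ih => intro h; exact (ih (by omega)).trans (ha m (by omega) h)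
  exact key j hij hjn

private lemma dmono {n : ℕ} {a : ℕ → ℝ}
    (hc : ∀ i, 2 ≤ i → i + 1 ≤ n → a (i + 1) - a i > a i - a (i - 1)) :
    ∀ p q, 1 ≤ p → p < q → q + 1 ≤ n → a (p + 1) - a p < a (q + 1) - a q := by
  intro p q h1 hpq hqn
  have key : ∀ m, p + 1 ≤ m → m + 1 ≤ n → a (p + 1) - a p < a (m + 1) - a m := by
    intro m hm
    induction m, hm using Nat.le_induction with
    | base =>
      intro h
      have h2 := hc (p + 1) (by omega) (by omega)
      simpa using h2
    | succ m hm ih =>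
      intro h
      have h2 := hc (m + 1) (by omega) (by omega)
      have h3 := ih (by omega)
      have h4 : m + 1 - 1 = m := by omega
      rw [h4] at h2
      linarith
  exact key q hpq hqn

private lemma blockmono {n : ℕ} {a : ℕ → ℝ}
    (hc : ∀ i, 2 ≤ i → i + 1 ≤ n → a (i + 1) - a i > a i - a (i - 1)) :
    ∀ p q m, 1 ≤ p → p < q → 1 ≤ m → q + m ≤ n →
      a (p + m) - a p < a (q + m) - a q := by
  intro p q m h1 hpq hm
  induction m, hm using Nat.le_induction with
  | base => intro h; simpa using dmono hc p q h1 hpq h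
  | succ m hm ih =>
    intro h
    have h2 := dmono hc (p + m) (q + m) (by omega) (by omega) (by omega)
    have h3 := ih (by omega)
    have e1 : p + (m + 1) = p + m + 1 := by omega
    have e2 : q + (m + 1) = q + m + 1 := by omega
    rw [e1, e2]
    linarith

private lemma Tsucc (i : ℕ) : (i + 1) * (i + 2) / 2 = i * (i + 1) / 2 + (i + 1) := by
  have h : (i + 1) * (i + 2) = i * (i + 1) + (i + 1) * 2 := by ring
  rw [h, Nat.add_mul_div_right _ _ (by norm_num)]

private lemma Tle {i j : ℕ} (h : i ≤ j) : i * (i + 1) / 2 ≤ j * (j + 1) / 2 :=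
  Nat.div_le_div_right (Nat.mul_le_mul h (by omega))

private lemma Tlt {i j : ℕ} (h : i < j) : i * (i + 1) / 2 < j * (j + 1) / 2 := by
  have key : i * (i + 1) + 2 ≤ j * (j + 1) := by nlinarith
  have h2 := Nat.div_le_div_right (c := 2) key
  rw [Nat.add_div_right _ (by norm_num)] at h2
  exact h2

/-- for a convex set `A = {a_1 < ... < a_n}` (given here as a strictly
increasing, convex sequence `a` on indices `1, ..., n`), with `k = ⌈√n⌉` and
`k + 1 + k(k+1)/2 ≤ n`, the set `M = {(a_{k+1-i}, a_{k+1+i(i+1)/2}) : 1 ≤ i ≤ k}` is a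
matching on `A` of size `k`, and the set of differences
`e_i = a_{k+1+i(i+1)/2} - a_{k+1-i}` (`1 ≤ i ≤ k`) is convex. -/
theorem statement6 (n k : ℕ) (a : ℕ → ℝ)
    (ha_mono : ∀ i, 1 ≤ i → i + 1 ≤ n → a i < a (i + 1))
    (ha_conv : ∀ i, 2 ≤ i → i + 1 ≤ n → a (i + 1) - a i > a i - a (i - 1))
    (hk : k = Nat.ceil (Real.sqrt n))
    (hkn : k + 1 + k * (k + 1) / 2 ≤ n)
    (A : Finset ℝ) (hA : A = (Finset.Icc 1 n).image a)
    (M : Finset (ℝ × ℝ))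
    (hM : M = (Finset.Icc 1 k).image (fun i => (a (k + 1 - i), a (k + 1 + i * (i + 1) / 2))))
    (e : ℕ → ℝ) (he : ∀ i, e i = a (k + 1 + i * (i + 1) / 2) - a (k + 1 - i)) :
    IsMatching A M ∧ M.card = k ∧
    (∀ i, 2 ≤ i → i + 1 ≤ k → e (i + 1) - e i > e i - e (i - 1)) := by
  obtain ⟨w, hw⟩ : ∃ w, k * (k + 1) / 2 = w := ⟨_, rfl⟩
  rw [hw] at hkn
  have hlt := amono ha_mono
  have hane : ∀ x y : ℕ, 1 ≤ x → x ≤ n → 1 ≤ y → y ≤ n → x ≠ y → a x ≠ a y := by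
    intro x y hx1 hxn hy1 hyn hxy
    rcases lt_or_gt_of_ne hxy with h | h
    · exact ne_of_lt (hlt x y hx1 h hyn)
    · exact ne_of_gt (hlt y x hy1 h hxn)
  -- bound on T i for i ≤ k
  have hTb : ∀ i : ℕ, i ≤ k → i * (i + 1) / 2 ≤ w := by
    intro i hi; rw [← hw]; exact Tle hi
  have hT1 : ∀ i : ℕ, 1 ≤ i → 1 ≤ i * (i + 1) / 2 := by
    intro i hi
    have := Tle (i := 1) (j := i) hi
    simpa using this
  refine ⟨⟨?_, ?_⟩, ?_, ?_⟩
  · -- pairs in A × A, distinct coordinates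
    intro p hp
    rw [hM] at hp
    simp only [Finset.mem_image, Finset.mem_Icc] at hp
    obtain ⟨i, ⟨hi1, hi2⟩, rfl⟩ := hp
    have hTi := hTb i hi2
    have hTi1 := hT1 i hi1
    refine ⟨?_, ?_, ?_⟩
    · rw [hA]
      exact Finset.mem_image.2 ⟨k + 1 - i, Finset.mem_Icc.2 ⟨by omega, by omega⟩, rfl⟩
    · rw [hA]
      exact Finset.mem_image.2 ⟨k + 1 + i * (i + 1) / 2, Finset.mem_Icc.2 ⟨by omega, by omega⟩, rfl⟩
    · exact hane _ _ (by omega) (by omega) (by omega) (by omega) (by omega)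
  · intro p hp q hq hpq
    rw [hM] at hp hq
    simp only [Finset.mem_image, Finset.mem_Icc] at hp hq
    obtain ⟨i, ⟨hi1, hi2⟩, rfl⟩ := hp
    obtain ⟨j, ⟨hj1, hj2⟩, rfl⟩ := hq
    have hij : i ≠ j := by rintro rfl; exact hpq rfl
    have hTi := hTb i hi2
    have hTj := hTb j hj2
    have hTi1 := hT1 i hi1
    have hTj1 := hT1 j hj1
    have hTne : i * (i + 1) / 2 ≠ j * (j + 1) / 2 := by
      rcases lt_or_gt_of_ne hij with h | h
      · exact ne_of_lt (Tlt h)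
      · exact ne_of_gt (Tlt h)
    exact ⟨hane _ _ (by omega) (by omega) (by omega) (by omega) (by omega),
      hane _ _ (by omega) (by omega) (by omega) (by omega) (by omega),
      hane _ _ (by omega) (by omega) (by omega) (by omega) (by omega),
      hane _ _ (by omega) (by omega) (by omega) (by omega) (by omega)⟩
  · rw [hM]
    rw [Finset.card_image_of_injOn, Nat.card_Icc]
    · omega
    · intro i hi j hj h
      simp only [Finset.mem_coe, Finset.mem_Icc] at hi hj
      have h1 : a (k + 1 - i) = a (k + 1 - j) := congrArg Prod.fst h
      by_contra hij
      exact hane _ _ (by omega) (by omega) (by omega) (by omega) (by omega) h1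
  · intro i h2 hik
    rw [he, he, he]
    -- index normalisation
    have hm1 : i - 1 + 1 = i := by omega
    have hm2 : i - 1 + 2 = i + 1 := by omega
    have hB0 : (i - 1) * (i - 1 + 1) / 2 = (i - 1) * i / 2 := by rw [hm1]
    have hB2 : i * (i + 1) / 2 = (i - 1) * i / 2 + i := by
      have := Tsucc (i - 1)
      rw [hm1, hm2] at this
      rw [this]
    have hB1 : (i + 1) * (i + 1 + 1) / 2 = (i - 1) * i / 2 + i + (i + 1) := by
      have := Tsucc i
      rw [show i + 1 + 1 = i + 2 from rfl, this, hB2]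
    obtain ⟨t, ht⟩ : ∃ t, (i - 1) * i / 2 = t := ⟨_, rfl⟩
    rw [ht] at hB0 hB1 hB2
    rw [hB0, hB1, hB2]
    have hbound : t + i + (i + 1) ≤ w := by
      have := hTb (i + 1) hik
      rw [hB1] at this
      omega
    rw [show k + 1 + (t + i + (i + 1)) = k + 1 + t + 2 * i + 1 from by omega,
        show k + 1 + (t + i) = k + 1 + t + i from by omega,
        show k + 1 - (i + 1) = k - i from by omega,
        show k + 1 - (i - 1) = k + 2 - i from by omega]
    have h1 := blockmono ha_conv (k + 1 + t) (k + 1 + t + i) i (by omega) (by omega) (by omega) (by omega)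
    rw [show k + 1 + t + i + i = k + 1 + t + 2 * i from by omega] at h1
    have h2 := dmono ha_conv (k + 1 - i) (k + 1 + t + 2 * i) (by omega) (by omega) (by omega)
    rw [show k + 1 - i + 1 = k + 2 - i from by omega] at h2
    have h3 := ha_mono (k - i) (by omega) (by omega)
    rw [show k - i + 1 = k + 1 - i from by omega] at h3
    linarith
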